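/- Let u : ℝ × ℝ → ℝ, u = u(t,x), be a C³ solution of the dissipative Camassa–Holm-type equation. Assume that for every t ≥ 0: the functions x ↦ u(t,x)² + u_x(t,x)² and x ↦ u u_t + u_x u_{tx} are integrable on ℝ; the flux Ψ(t,x) := u³ - u² u_{xx} - u u_{tx} + (Γ/2)u_x² - Γ u u_{xx} - (α/2)u² - (β/4)u⁴ - (γ/5)u⁵ - λ u u_x tends to 0 as x → ±∞ and x ↦ ∂_x Ψ(t,x) is integrable; and the energy ℋ₁(t) := (1/2)∫_ℝ (u(t,x)² + u_x(t,x)²) dx is differentiable in t with derivative ∫_ℝ (u u_t + u_x u_{tx}) dx. Then for all t ≥ 0: ℋ₁(t) = e^{-2λ t} ℋ₁(0); in particular, if λ ≥ 0, then ∫_ℝ (u(t,x)² + u_x(t,x)²) dx ≤ ∫_ℝ (u(0,x)² + u_x(0,x)²) dx for all t ≥ 0. -/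

import Mathlib

open MeasureTheory Filter

/-- Partial derivative with respect to the first (time) variable of a curried
function `u : ℝ → ℝ → ℝ`, `u = u t x`. -/
noncomputable def pt (u : ℝ → ℝ → ℝ) : ℝ → ℝ → ℝ := fun t x => deriv (fun s => u s x) t

/-- Partial derivative with respect to the second (space) variable of a curried
function `u : ℝ → ℝ → ℝ`, `u = u t x`. -/
noncomputable def px (u : ℝ → ℝ → ℝ) : ℝ → ℝ → ℝ := fun t x => deriv (fun y => u t y) x

/-- The flux `Ψ` of the energy conservation law of the dissipative
Camassa–Holm-type equation. -/
noncomputable def Psi (lam α β γ Γ : ℝ) (u : ℝ → ℝ → ℝ) : ℝ → ℝ → ℝ := fun t x =>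
  (u t x) ^ 3 - (u t x) ^ 2 * px (px u) t x - u t x * px (pt u) t x
    + (Γ / 2) * (px u t x) ^ 2 - Γ * u t x * px (px u) t x
    - (α / 2) * (u t x) ^ 2 - (β / 4) * (u t x) ^ 4 - (γ / 5) * (u t x) ^ 5
    - lam * u t x * px u t x


noncomputable def dX (g : ℝ × ℝ → ℝ) : ℝ × ℝ → ℝ := fun p => fderiv ℝ g p (0, 1)
noncomputable def dT (g : ℝ × ℝ → ℝ) : ℝ × ℝ → ℝ := fun p => fderiv ℝ g p (1, 0)

lemma contDiff_dX {n m : ℕ∞} {g : ℝ × ℝ → ℝ} (hg : ContDiff ℝ n g) (h : (m : WithTop ℕ∞) + 1 ≤ (n : WithTop ℕ∞)) :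
    ContDiff ℝ m (dX g) :=
  ((ContinuousLinearMap.apply ℝ ℝ (((0:ℝ),(1:ℝ)) : ℝ × ℝ)).contDiff).comp (hg.fderiv_right h)

lemma contDiff_dT {n m : ℕ∞} {g : ℝ × ℝ → ℝ} (hg : ContDiff ℝ n g) (h : (m : WithTop ℕ∞) + 1 ≤ (n : WithTop ℕ∞)) :
    ContDiff ℝ m (dT g) :=
  ((ContinuousLinearMap.apply ℝ ℝ (((1:ℝ),(0:ℝ)) : ℝ × ℝ)).contDiff).comp (hg.fderiv_right h)

lemma hasDerivAt_sliceX {g : ℝ × ℝ → ℝ} {t x : ℝ} (hg : DifferentiableAt ℝ g (t, x)) :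
    HasDerivAt (fun y => g (t, y)) (dX g (t, x)) x := by
  have h1 : HasDerivAt (fun y : ℝ => ((t, y) : ℝ × ℝ)) ((0 : ℝ), (1 : ℝ)) x :=
    (hasDerivAt_const x t).prodMk (hasDerivAt_id x)
  exact hg.hasFDerivAt.comp_hasDerivAt x h1

lemma hasDerivAt_sliceT {g : ℝ × ℝ → ℝ} {t x : ℝ} (hg : DifferentiableAt ℝ g (t, x)) :
    HasDerivAt (fun s => g (s, x)) (dT g (t, x)) t := by
  have h1 : HasDerivAt (fun s : ℝ => ((s, x) : ℝ × ℝ)) ((1 : ℝ), (0 : ℝ)) t :=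
    (hasDerivAt_id t).prodMk (hasDerivAt_const t x)
  exact hg.hasFDerivAt.comp_hasDerivAt t h1

/-- decay of the energy, `ℋ₁(t) = e^{-2λt} ℋ₁(0)`, and monotone
bound when `λ ≥ 0`. -/
theorem stmt_4 (lam α β γ Γ : ℝ) (u : ℝ → ℝ → ℝ)
    (hu : ContDiff ℝ 3 (Function.uncurry u))
    (heq : ∀ t x : ℝ,
      pt u t x - px (px (pt u)) t x + 3 * u t x * px u t x
          + lam * (u t x - px (px u) t x)
        = 2 * px u t x * px (px u) t x + u t x * px (px (px u)) t x
          + α * px u t x + β * (u t x) ^ 2 * px u t x + γ * (u t x) ^ 3 * px u t x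
          + Γ * px (px (px u)) t x)
    (hint : ∀ t : ℝ, 0 ≤ t → Integrable (fun x => (u t x) ^ 2 + (px u t x) ^ 2))
    (hintt : ∀ t : ℝ, 0 ≤ t →
      Integrable (fun x => u t x * pt u t x + px u t x * px (pt u) t x))
    (hfluxTop : ∀ t : ℝ, 0 ≤ t → Tendsto (fun x => Psi lam α β γ Γ u t x) atTop (nhds 0))
    (hfluxBot : ∀ t : ℝ, 0 ≤ t → Tendsto (fun x => Psi lam α β γ Γ u t x) atBot (nhds 0))
    (hfluxInt : ∀ t : ℝ, 0 ≤ t →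
      Integrable (fun x => deriv (fun y => Psi lam α β γ Γ u t y) x))
    (hdiff : ∀ t : ℝ, 0 ≤ t →
      HasDerivAt (fun s => (1 / 2) * ∫ x : ℝ, ((u s x) ^ 2 + (px u s x) ^ 2))
        (∫ x : ℝ, (u t x * pt u t x + px u t x * px (pt u) t x)) t) :
    (∀ t : ℝ, 0 ≤ t →
      (1 / 2) * (∫ x : ℝ, ((u t x) ^ 2 + (px u t x) ^ 2))
        = Real.exp (-(2 * lam) * t) * ((1 / 2) * ∫ x : ℝ, ((u 0 x) ^ 2 + (px u 0 x) ^ 2)))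
    ∧ (0 ≤ lam → ∀ t : ℝ, 0 ≤ t →
        (∫ x : ℝ, ((u t x) ^ 2 + (px u t x) ^ 2))
          ≤ ∫ x : ℝ, ((u 0 x) ^ 2 + (px u 0 x) ^ 2)) := by

  set v : ℝ × ℝ → ℝ := Function.uncurry u with hv
  have hv3 : ContDiff ℝ 3 v := hu
  have hvd : Differentiable ℝ v := hv3.differentiable (by norm_num)
  have hx2 : ContDiff ℝ 2 (dX v) := contDiff_dX hv3 (by norm_num)
  have ht2 : ContDiff ℝ 2 (dT v) := contDiff_dT hv3 (by norm_num)
  have hxx1 : ContDiff ℝ 1 (dX (dX v)) := contDiff_dX hx2 (by norm_num)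
  have htx1 : ContDiff ℝ 1 (dX (dT v)) := contDiff_dX ht2 (by norm_num)
  have hpx : px u = fun t x => dX v (t, x) := by
    funext t x
    exact (hasDerivAt_sliceX (hvd (t, x))).deriv
  have hpt : pt u = fun t x => dT v (t, x) := by
    funext t x
    exact (hasDerivAt_sliceT (hvd (t, x))).deriv
  have hpxx : px (fun a b => dX v (a, b)) = fun t x => dX (dX v) (t, x) := by
    funext t x
    exact (hasDerivAt_sliceX ((hx2.differentiable (by norm_num)) (t, x))).deriv
  have hptx : px (fun a b => dT v (a, b)) = fun t x => dX (dT v) (t, x) := by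
    funext t x
    exact (hasDerivAt_sliceX ((ht2.differentiable (by norm_num)) (t, x))).deriv
  have hpxxx : px (fun a b => dX (dX v) (a, b)) = fun t x => dX (dX (dX v)) (t, x) := by
    funext t x
    exact (hasDerivAt_sliceX ((hxx1.differentiable (by norm_num)) (t, x))).deriv
  have hptxx : px (fun a b => dX (dT v) (a, b)) = fun t x => dX (dX (dT v)) (t, x) := by
    funext t x
    exact (hasDerivAt_sliceX ((htx1.differentiable (by norm_num)) (t, x))).deriv
  have key : ∀ t x : ℝ, HasDerivAt (fun y => Psi lam α β γ Γ u t y)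
      (-(u t x * pt u t x + px u t x * px (pt u) t x)
        - lam * ((u t x) ^ 2 + (px u t x) ^ 2)) x := by
    intro t x
    have Hu : HasDerivAt (fun y => v (t, y)) (dX v (t, x)) x := hasDerivAt_sliceX (hvd (t, x))
    have Hux : HasDerivAt (fun y => dX v (t, y)) (dX (dX v) (t, x)) x :=
      hasDerivAt_sliceX ((hx2.differentiable (by norm_num)) (t, x))
    have Huxx : HasDerivAt (fun y => dX (dX v) (t, y)) (dX (dX (dX v)) (t, x)) x :=
      hasDerivAt_sliceX ((hxx1.differentiable (by norm_num)) (t, x))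
    have Hutx : HasDerivAt (fun y => dX (dT v) (t, y)) (dX (dX (dT v)) (t, x)) x :=
      hasDerivAt_sliceX ((htx1.differentiable (by norm_num)) (t, x))
    have H := ((((((((Hu.pow 3).sub ((Hu.pow 2).mul Huxx)).sub (Hu.mul Hutx)).add
      ((Hux.pow 2).const_mul (Γ/2))).sub ((Hu.const_mul Γ).mul Huxx)).sub
      ((Hu.pow 2).const_mul (α/2))).sub ((Hu.pow 4).const_mul (β/4))).sub
      ((Hu.pow 5).const_mul (γ/5))).sub ((Hu.const_mul lam).mul Hux)
    have he := heq t x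
    simp only [hpx, hpt, hpxx, hptx, hpxxx, hptxx] at he
    simp only [show u = fun a b => v (a, b) from rfl] at he
    simp only [Psi, hpx, hpt, hpxx, hptx]
    simp only [show u = fun a b => v (a, b) from rfl]
    refine H.congr_deriv (Eq.symm ?_)
    simp only [Pi.pow_apply]
    linear_combination (-(v (t, x))) * he
  have hzero : ∀ t : ℝ, 0 ≤ t →
      (∫ x : ℝ, deriv (fun y => Psi lam α β γ Γ u t y) x) = 0 := by
    intro t ht
    have hder : ∀ x : ℝ, HasDerivAt (fun y => Psi lam α β γ Γ u t y)
        (deriv (fun y => Psi lam α β γ Γ u t y) x) x :=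
      fun x => ((key t x).differentiableAt).hasDerivAt
    have hIic := integral_Iic_of_hasDerivAt_of_tendsto' (a := (0:ℝ))
      (fun x _ => hder x) ((hfluxInt t ht).integrableOn) (hfluxBot t ht)
    have hIoi := integral_Ioi_of_hasDerivAt_of_tendsto' (a := (0:ℝ))
      (fun x _ => hder x) ((hfluxInt t ht).integrableOn) (hfluxTop t ht)
    rw [← intervalIntegral.integral_Iic_add_Ioi (b := (0:ℝ)) ((hfluxInt t ht).integrableOn)
      ((hfluxInt t ht).integrableOn), hIic, hIoi]
    ring
  set H : ℝ → ℝ := fun s => (1 / 2) * ∫ x : ℝ, ((u s x) ^ 2 + (px u s x) ^ 2) with hHdef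
  have hH : ∀ t : ℝ, 0 ≤ t → HasDerivAt H (-(2 * lam) * H t) t := by
    intro t ht
    have h1 := hdiff t ht
    have h2 : (fun x => u t x * pt u t x + px u t x * px (pt u) t x)
        = fun x => -(deriv (fun y => Psi lam α β γ Γ u t y) x)
            + (-lam) * ((u t x) ^ 2 + (px u t x) ^ 2) := by
      funext x
      have := (key t x).deriv
      rw [this]
      ring
    rw [h2] at h1
    have ha : Integrable (fun x : ℝ => -deriv (fun y => Psi lam α β γ Γ u t y) x) :=
      (hfluxInt t ht).neg
    have hb : Integrable (fun x : ℝ => -lam * ((u t x) ^ 2 + (px u t x) ^ 2)) :=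
      (hint t ht).const_mul (-lam)
    have e : (∫ x : ℝ, (-deriv (fun y => Psi lam α β γ Γ u t y) x
          + -lam * ((u t x) ^ 2 + (px u t x) ^ 2))) = -(2 * lam) * H t := by
      rw [integral_add ha hb, integral_neg, hzero t ht, integral_const_mul, hHdef]
      ring
    rw [e] at h1
    exact h1
  have main : ∀ t : ℝ, 0 ≤ t → H t = Real.exp (-(2 * lam) * t) * H 0 := by
    intro T hT
    have hG : ∀ s : ℝ, 0 ≤ s →
        HasDerivAt (fun r => Real.exp (2 * lam * r) * H r) 0 s := by
      intro s hs
      have h1 : HasDerivAt (fun r : ℝ => Real.exp (2 * lam * r))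
          (Real.exp (2 * lam * s) * (2 * lam)) s := by
        have h0 : HasDerivAt (fun r : ℝ => 2 * lam * r) (2 * lam) s := by
          simpa using (hasDerivAt_id s).const_mul (2 * lam)
        exact h0.exp
      have h2 := h1.mul (hH s hs)
      refine h2.congr_deriv (Eq.symm ?_)
      ring
    have hconst := constant_of_has_deriv_right_zero
      (f := fun r => Real.exp (2 * lam * r) * H r) (a := 0) (b := T)
      (fun s hs => ((hG s hs.1).continuousAt).continuousWithinAt)
      (fun s hs => (hG s hs.1).hasDerivWithinAt)
      T (Set.right_mem_Icc.mpr hT)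
    have h4 : Real.exp (2 * lam * T) * H T = H 0 := by simpa using hconst
    have h5 : Real.exp (2 * lam * T) ≠ 0 := Real.exp_ne_zero _
    field_simp [Real.exp_neg, neg_mul]
    rw [← h4, ← mul_assoc, ← Real.exp_add]
    simp
  constructor
  · exact main
  · intro hlam t ht
    have h := main t ht
    have hE1 : Real.exp (-(2 * lam) * t) ≤ 1 := by
      apply Real.exp_le_one_iff.mpr  -- maybe name differs
      nlinarith
    have hH0 : 0 ≤ H 0 := by
      rw [hHdef]
      have : 0 ≤ ∫ x : ℝ, ((u 0 x) ^ 2 + (px u 0 x) ^ 2) :=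
        integral_nonneg (fun x => by positivity)
      linarith
    have hHt : H t ≤ H 0 := by
      rw [h]
      nlinarith
    rw [hHdef] at hHt
    simp only at hHt
    linarith
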